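/- arXiv:1511.03678 — 3 statements merged into one kernel-verified Lean document; each statement's English description precedes it below -/
import Mathlib

section
/- If F is a free group and α, β ∈ F commute with each other, then there exists ω ∈ F and integers m, m' such that α = ω^m and β = ω^{m'}. -/
open IsFreeGroup in
private lemma cyclic_of_free_comm {G : Type*} [Group G] [IsFreeGroup G]
    (hc : ∀ x y : G, x * y = y * x) : ∃ g : G, ∀ x : G, ∃ n : ℤ, x = g ^ n := by
  set X := Generators G
  have hsub : ∀ x y : X, x = y := by
    intro x y
    by_contra hxy
    -- map into a nonabelian group
    letI : DecidableEq X := Classical.decEq X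
    let f : X → Equiv.Perm (Fin 3) := fun z =>
      if z = x then Equiv.swap 0 1 else Equiv.swap 0 2
    have hcomm : FreeGroup.of x * FreeGroup.of y = FreeGroup.of y * FreeGroup.of x := by
      have := hc ((mulEquiv G) (FreeGroup.of x)) ((mulEquiv G) (FreeGroup.of y))
      rw [← map_mul, ← map_mul] at this
      exact (mulEquiv G).injective this
    have := congrArg (FreeGroup.lift f) hcomm
    simp only [map_mul, FreeGroup.lift_apply_of, f, if_pos rfl, if_neg (Ne.symm hxy)] at this
    exact absurd this (by decide)
  by_cases hX : Nonempty X
  · obtain ⟨x0⟩ := hX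
    refine ⟨(mulEquiv G) (FreeGroup.of x0), fun g => ?_⟩
    have : ∃ n : ℤ, (mulEquiv G).symm g = FreeGroup.of x0 ^ n := by
      refine FreeGroup.induction_on ((mulEquiv G).symm g) ⟨0, by simp⟩ ?_ ?_ ?_
      · intro y; exact ⟨1, by rw [hsub y x0]; simp⟩
      · rintro y ⟨n, hn⟩; exact ⟨-n, by rw [hn, zpow_neg]⟩
      · rintro u v ⟨n, hn⟩ ⟨m, hm⟩; exact ⟨n + m, by rw [hn, hm, zpow_add]⟩
    obtain ⟨n, hn⟩ := this
    refine ⟨n, ?_⟩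
    have := congrArg (mulEquiv G) hn
    simpa [map_zpow] using this
  · refine ⟨1, fun g => ⟨0, ?_⟩⟩
    have : (mulEquiv G).symm g = 1 := by
      refine FreeGroup.induction_on ((mulEquiv G).symm g) rfl ?_ ?_ ?_
      · intro y; exact absurd ⟨y⟩ hX
      · intro y h; rw [h]; simp
      · intro u v hu hv; rw [hu, hv, one_mul]
    have := congrArg (mulEquiv G) this
    simpa using this

/-- If `a` and `b` are commuting elements of a free group, then they are both
powers of a common element `ω`. -/
theorem free_group_commute_common_power {α : Type*} (a b : FreeGroup α)
    (h : a * b = b * a) :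
    ∃ (ω : FreeGroup α) (m m' : ℤ), a = ω ^ m ∧ b = ω ^ m' := by
  set H : Subgroup (FreeGroup α) := Subgroup.closure {a, b} with hH
  have ha : a ∈ H := Subgroup.subset_closure (by simp)
  have hb : b ∈ H := Subgroup.subset_closure (by simp)
  -- H is commutative
  have hcent : H ≤ Subgroup.centralizer {a, b} := by
    rw [hH, Subgroup.closure_le]
    rintro x (rfl | rfl) <;>
      refine SetLike.mem_coe.mpr (Subgroup.mem_centralizer_iff.mpr ?_) <;>
      rintro y (rfl | rfl)
    · rfl
    · exact h.symm
    · exact h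
    · rfl
  have hcomm : ∀ x y : H, x * y = y * x := by
    rintro ⟨x, hx⟩ ⟨y, hy⟩
    ext
    show x * y = y * x
    have hxc := hcent hx
    refine Subgroup.closure_induction ?_ ?_ ?_ ?_ hy
    · rintro z (rfl | rfl)
      · exact (Subgroup.mem_centralizer_iff.mp hxc z (by simp)).symm
      · exact (Subgroup.mem_centralizer_iff.mp hxc z (by simp)).symm
    · simp
    · intro u v _ _ hu hv
      rw [← mul_assoc, hu, mul_assoc, hv, mul_assoc]
    · intro u _ hu
      have := congrArg (fun t => u⁻¹ * t * u⁻¹) hu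
      simpa [mul_assoc] using this.symm
  obtain ⟨g, hg⟩ := cyclic_of_free_comm hcomm
  obtain ⟨m, hm⟩ := hg ⟨a, ha⟩
  obtain ⟨m', hm'⟩ := hg ⟨b, hb⟩
  exact ⟨(g : FreeGroup α), m, m', by
    simpa using congrArg (Subtype.val) hm, by
    simpa using congrArg (Subtype.val) hm'⟩
end

section
/- Let w be a nontrivial reduced word in a free group. If for integers m, m' the reduced forms of w^m and w^{m'} have equal length, then m = m' or m = -m'. -/
namespace NormPowAux

open FreeGroup List

variable {α : Type*} [DecidableEq α]

/-- Non-cancelling adjacency relation on letters. -/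
def Rl : (α × Bool) → (α × Bool) → Prop := fun x y => y ≠ (x.1, !x.2)

/-- A word is reduced iff adjacent letters never cancel. -/
def Rd (L : List (α × Bool)) : Prop := List.Chain' Rl L

lemma rd_of_no_pair {L : List (α × Bool)}
    (h : ∀ (L₁ L₂ : List (α × Bool)) (x : α) (b : Bool),
      L ≠ L₁ ++ (x, b) :: (x, !b) :: L₂) : Rd L := by
  induction L with
  | nil => exact List.isChain_nil
  | cons a t ih =>
    cases t with
    | nil => exact List.isChain_singleton a
    | cons b t' =>
      rw [Rd, List.Chain', List.isChain_cons_cons]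
      constructor
      · intro hb
        exact h [] t' a.1 a.2 (by rw [hb]; rfl)
      · exact ih (fun L₁ L₂ x bb hh => h (a :: L₁) L₂ x bb (by rw [hh]; rfl))

lemma rd_toWord (x : FreeGroup α) : Rd x.toWord := by
  apply rd_of_no_pair
  intro L₁ L₂ y b hh
  have : reduce x.toWord = L₁ ++ (y, b) :: (y, !b) :: L₂ := by
    rw [reduce_toWord]; exact hh
  exact reduce.not this

lemma reduce_eq_self {L : List (α × Bool)} (h : Rd L) : reduce L = L := by
  have hred := @reduce.red α L
  rcases Relation.ReflTransGen.cases_head hred with heq | ⟨M, hstep, _⟩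
  · exact heq.symm
  · exfalso
    cases hstep with
    | @not L₁ L₂ x b =>
      have : Rl (x, b) (x, !b) := by
        have h2 : List.Chain' Rl ((x, b) :: (x, !b) :: L₂) :=
          h.infix ⟨L₁, [], by simp⟩
        exact (List.isChain_cons_cons.1 h2).1
      exact this rfl

lemma toWord_mk_eq {L : List (α × Bool)} (h : Rd L) : (mk L).toWord = L := by
  rw [toWord_mk, reduce_eq_self h]

lemma norm_mk_eq {L : List (α × Bool)} (h : Rd L) :
    FreeGroup.norm (mk L) = L.length := by
  rw [FreeGroup.norm, toWord_mk_eq h]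

lemma invRev_cons (a : α × Bool) (L : List (α × Bool)) :
    invRev (a :: L) = invRev L ++ [(a.1, !a.2)] := by
  simp [invRev]

/-- Cyclic decomposition of a nonempty reduced word. -/
lemma decomp : ∀ (W : List (α × Bool)), Rd W → W ≠ [] →
    ∃ u c, c ≠ [] ∧ Rd (c ++ c) ∧ W = u ++ c ++ invRev u := by
  suffices H : ∀ (n : ℕ) (W : List (α × Bool)), W.length = n → Rd W → W ≠ [] →
      ∃ u c, c ≠ [] ∧ Rd (c ++ c) ∧ W = u ++ c ++ invRev u by
    exact fun W => H W.length W rfl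
  intro n
  induction n using Nat.strong_induction_on with
  | _ n ih =>
  intro W hn hW hne
  by_cases hcyc : Rd (W ++ W)
  · exact ⟨[], W, hne, hcyc, by simp [invRev]⟩
  · -- the last letter of W cancels the first
    obtain ⟨a, T, rfl⟩ := List.exists_cons_of_ne_nil hne
    have hj : ¬ ∀ x ∈ (a :: T).getLast?, ∀ y ∈ (a :: T).head?, Rl x y :=
      fun hj => hcyc (hW.append hW hj)
    push_neg at hj
    obtain ⟨x, hx, y, hy, hxy⟩ := hj
    rw [List.head?_cons, Option.mem_some_iff] at hy
    subst hy
    simp only [Rl, not_not] at hxy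
    cases hT : T.eq_nil_or_concat with
    | inl h0 =>
      subst h0
      exfalso
      simp only [List.getLast?_singleton, Option.mem_some_iff] at hx
      subst hx
      have := congrArg Prod.snd hxy
      simp at this
    | inr h0 =>
      obtain ⟨M, l, rfl⟩ := h0
      simp only [List.concat_eq_append] at hn hW hne hcyc hx ⊢
      have hlast : (a :: (M ++ [l])).getLast? = some l := by
        rw [show a :: (M ++ [l]) = (a :: M) ++ [l] by simp]
        exact List.getLast?_concat
      rw [hlast, Option.mem_some_iff] at hx
      subst hx
      -- M nonempty
      cases hM : M.eq_nil_or_concat' with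
      | inl h1 =>
        subst h1
        exfalso
        have h2 : Rl a l := (List.isChain_cons_cons.1 hW).1
        apply h2
        rw [hxy]
        ext <;> simp [show a = (l.1, !l.2) from hxy]
      | inr h1 =>
        have hMne : M ≠ [] := by rcases h1 with ⟨x, M', rfl⟩; simp
        have hMrd : Rd M := hW.infix ⟨[a], [l], by simp⟩
        obtain ⟨u, c, hc, hcc, hMeq⟩ :=
          ih M.length (by simp [← hn]) M rfl hMrd hMne
        refine ⟨a :: u, c, hc, hcc, ?_⟩
        rw [invRev_cons, hMeq]
        have hl : (a.1, !a.2) = l := by rw [hxy]; simp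
        simp [hl]

/-- `n+1`-fold concatenation of `c`. -/
def J (c : List (α × Bool)) : ℕ → List (α × Bool)
  | 0 => c
  | n + 1 => c ++ J c n

lemma J_ne_nil {c : List (α × Bool)} (hc : c ≠ []) (n : ℕ) : J c n ≠ [] := by
  cases n <;> simp [J, hc]

lemma J_length (c : List (α × Bool)) (n : ℕ) :
    (J c n).length = (n + 1) * c.length := by
  induction n with
  | zero => simp [J]
  | succ n ihn => simp [J, ihn]; ring

lemma mk_J (c : List (α × Bool)) (n : ℕ) : mk (J c n) = (mk c) ^ (n + 1) := by
  induction n with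
  | zero => simp [J]
  | succ n ihn => rw [J, ← mul_mk, ihn, ← pow_succ']

lemma rd_cJ {c : List (α × Bool)} (hc : c ≠ []) (hcc : Rd (c ++ c)) (n : ℕ) :
    Rd (c ++ J c n) := by
  induction n with
  | zero => exact hcc
  | succ n ihn =>
    have := List.IsChain.append_overlap hcc ihn hc
    rw [List.append_assoc] at this
    exact this

lemma rd_sandwich {u c : List (α × Bool)} (hc : c ≠ []) (hcc : Rd (c ++ c))
    (h : Rd (u ++ c ++ invRev u)) (n : ℕ) : Rd (u ++ J c n ++ invRev u) := by
  have huc : Rd (u ++ c) := h.prefix ⟨invRev u, by simp⟩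
  have hcv : Rd (c ++ invRev u) := h.suffix ⟨u, by simp⟩
  have huJ : ∀ n, Rd (u ++ J c n) := by
    intro n
    induction n with
    | zero => exact huc
    | succ n ihn =>
      have := List.IsChain.append_overlap huc (rd_cJ hc hcc n) hc
      rw [List.append_assoc] at this
      exact this
  have hJv : ∀ n, Rd (J c n ++ invRev u) := by
    intro n
    induction n with
    | zero => exact hcv
    | succ n ihn =>
      have := List.IsChain.append_overlap (rd_cJ hc hcc n) ihn (J_ne_nil hc n)
      rw [List.append_assoc] at this
      show Rd ((c ++ J c n) ++ invRev u)
      rw [List.append_assoc]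
      exact this
  exact List.IsChain.append_overlap (huJ n) (hJv n) (J_ne_nil hc n)

/-- Norm of powers: `norm (w ^ (n+1)) = 2 |u| + (n+1) |c|`. -/
lemma norm_pow_succ (w : FreeGroup α) (hw : w ≠ 1) :
    ∃ a b : ℕ, 0 < b ∧ ∀ n : ℕ, (w ^ (n + 1)).norm = a + (n + 1) * b := by
  have hWrd := rd_toWord w
  have hWne : w.toWord ≠ [] := fun h => hw (toWord_eq_nil_iff.1 h)
  obtain ⟨u, c, hc, hcc, hWeq⟩ := decomp w.toWord hWrd hWne
  refine ⟨2 * u.length, c.length, List.length_pos_iff.2 hc, fun n => ?_⟩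
  have hpow : w ^ (n + 1) = mk (u ++ J c n ++ invRev u) := by
    have hw' : w = mk u * mk c * mk (invRev u) := by
      conv_lhs => rw [← mk_toWord (x := w), hWeq]
      rw [← mul_mk, ← mul_mk]
    have hinv : mk (invRev u) = (mk u)⁻¹ := (inv_mk).symm
    rw [← mul_mk, ← mul_mk, mk_J, hw', hinv, conj_pow]
  rw [hpow, norm_mk_eq (rd_sandwich hc hcc (hWeq ▸ hWrd) n)]
  simp [J_length]
  ring

lemma norm_strictMono (w : FreeGroup α) (hw : w ≠ 1) :
    StrictMono (fun n : ℕ => (w ^ n).norm) := by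
  obtain ⟨a, b, hb, hab⟩ := norm_pow_succ w hw
  have h0 : (w ^ 0).norm = 0 := by rw [pow_zero, FreeGroup.norm_one]
  apply strictMono_nat_of_lt_succ
  intro n
  cases n with
  | zero => simp only [h0, hab 0]; positivity
  | succ n => simp only [hab n, hab (n + 1)]; nlinarith

end NormPowAux

/-- If `w` is a nontrivial element of a free group and the reduced forms of
`w ^ m` and `w ^ m'` have equal length, then `m = ± m'`. -/
theorem norm_pow_eq_iff {α : Type*} [DecidableEq α] (w : FreeGroup α) (hw : w ≠ 1)
    (m m' : ℤ) (h : (w ^ m).norm = (w ^ m').norm) :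
    m = m' ∨ m = -m' := by
  have key : ∀ k : ℤ, (w ^ k).norm = (w ^ (k.natAbs : ℕ)).norm := by
    intro k
    rcases Int.natAbs_eq k with hk | hk
    · conv_lhs => rw [hk]
      rw [zpow_natCast]
    · conv_lhs => rw [hk]
      rw [zpow_neg, FreeGroup.norm_inv_eq, zpow_natCast]
  rw [key m, key m'] at h
  have := (NormPowAux.norm_strictMono w hw).injective h
  rcases Int.natAbs_eq_natAbs_iff.1 this with h1 | h1
  · exact Or.inl h1
  · exact Or.inr h1
end

section
/- For any graph G, three times the girth of G is at most the abelian girth of G: 3·girth(G) ≤ Abl(G). -/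
/-- A multigraph: vertices, edges, and tail/head maps (loops and parallel
edges allowed). -/
structure MGraph where
  V : Type
  E : Type
  tail : E → V
  head : E → V

namespace MGraph

variable (G : MGraph)

/-- Directed edges: an edge together with an orientation. -/
abbrev Dir := G.E × Bool

/-- The tail of a directed edge. -/
def dtail : G.Dir → G.V := fun d => if d.2 then G.tail d.1 else G.head d.1

/-- The head of a directed edge. -/
def dhead : G.Dir → G.V := fun d => if d.2 then G.head d.1 else G.tail d.1

/-- The inverse (reversal) of a directed edge. -/
def dinv : G.Dir → G.Dir := fun d => (d.1, !d.2)

/-- A walk is a list of directed edges in which the head of each directed edge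
is the tail of the next one. -/
def IsWalk (w : List G.Dir) : Prop :=
  w.Chain' (fun a b => G.dhead a = G.dtail b)

/-- A walk is non-backtracking if no directed edge is immediately followed by
its inverse. -/
def NonBack (w : List G.Dir) : Prop :=
  w.Chain' (fun a b => b ≠ G.dinv a)

/-- The starting vertex of a (nonempty) walk. -/
def wstart (w : List G.Dir) : Option G.V := w.head?.map G.dtail

/-- The terminating vertex of a (nonempty) walk. -/
def wend (w : List G.Dir) : Option G.V := w.getLast?.map G.dhead

/-- A walk is closed if it is nontrivial and its endpoints coincide. -/
def Closed (w : List G.Dir) : Prop := w ≠ [] ∧ G.wstart w = G.wend w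

/-- The number of times the directed edge `d` is traversed by the walk `w`. -/
noncomputable def cnt (w : List G.Dir) (d : G.Dir) : ℕ :=
  letI := Classical.decEq G.Dir
  w.count d

/-- A walk is edge neutral if it traverses each edge the same number of times
in each direction. -/
def EdgeNeutral (w : List G.Dir) : Prop :=
  ∀ e : G.E, G.cnt w (e, true) = G.cnt w (e, false)

/-- The girth: the minimal length of a nontrivial closed non-backtracking
walk (`⊤` if none exists). -/
noncomputable def girth : ℕ∞ :=
  sInf {n : ℕ∞ | ∃ w : List G.Dir,
    G.IsWalk w ∧ G.NonBack w ∧ G.Closed w ∧ n = w.length}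

/-- The abelian girth: the minimal length of a nontrivial closed
non-backtracking edge-neutral walk (`⊤` if none exists). -/
noncomputable def ablGirth : ℕ∞ :=
  sInf {n : ℕ∞ | ∃ w : List G.Dir,
    G.IsWalk w ∧ G.NonBack w ∧ G.Closed w ∧ G.EdgeNeutral w ∧ n = w.length}

/-- The degree of a vertex: the number of directed edges with tail `v`
(so a loop contributes 2). -/
noncomputable def deg (v : G.V) : ℕ := Nat.card {d : G.Dir // G.dtail d = v}

/-- Adjacency via a directed edge. -/
def adj (u v : G.V) : Prop := ∃ d : G.Dir, G.dtail d = u ∧ G.dhead d = v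

/-- A graph is connected if it is nonempty and any two vertices are joined by
a walk. -/
def Connected : Prop :=
  Nonempty G.V ∧ ∀ u v : G.V, Relation.ReflTransGen G.adj u v

/-- The Euler characteristic `|V| - |E|`. -/
noncomputable def eulerChar : ℤ := (Nat.card G.V : ℤ) - (Nat.card G.E : ℤ)

/-- A walk traverses each edge at most once (in either direction). -/
def EdgesDistinct (w : List G.Dir) : Prop :=
  ∀ e : G.E, G.cnt w (e, true) + G.cnt w (e, false) ≤ 1

/-- The edge `e` occurs in the walk `w` (in some direction). -/
def edgeIn (w : List G.Dir) (e : G.E) : Prop := (e, true) ∈ w ∨ (e, false) ∈ w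

/-- The vertex `x` is visited by the walk `w`. -/
def vtxIn (w : List G.Dir) (x : G.V) : Prop :=
  (∃ d ∈ w, G.dtail d = x) ∨ (∃ d ∈ w, G.dhead d = x)

/-- A cycle based at `v`: a nontrivial strongly closed non-backtracking walk
from `v` to `v` traversing each edge at most once. -/
def IsCycleAt (v : G.V) (w : List G.Dir) : Prop :=
  G.IsWalk w ∧ G.NonBack w ∧ G.wstart w = some v ∧ G.wend w = some v ∧
    G.EdgesDistinct w ∧
    (∀ a b : G.Dir, w.head? = some a → w.getLast? = some b → a ≠ G.dinv b)

/-- A path from `u` to `v`: a non-backtracking walk from `u` to `v`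
traversing each edge at most once. -/
def IsPathBetween (u v : G.V) (w : List G.Dir) : Prop :=
  G.IsWalk w ∧ G.NonBack w ∧ G.wstart w = some u ∧ G.wend w = some v ∧
    G.EdgesDistinct w

/-- One elementary reduction step on a walk: deleting a reversal, i.e. an
adjacent pair consisting of a directed edge and its inverse. -/
def RStep (w w' : List G.Dir) : Prop :=
  ∃ (pre suf : List G.Dir) (d : G.Dir),
    w = pre ++ d :: G.dinv d :: suf ∧ w' = pre ++ suf

end MGraph



namespace MGraph

variable {G : MGraph}

lemma dinv_dinv (d : G.Dir) : G.dinv (G.dinv d) = d := by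
  cases d; simp [dinv]

lemma dinv_ne (d : G.Dir) : G.dinv d ≠ d := by
  rcases d with ⟨e, b⟩; cases b <;> simp [dinv]

lemma dinv_eq_comm {a b : G.Dir} : G.dinv a = b ↔ a = G.dinv b := by
  constructor
  · rintro rfl; rw [dinv_dinv]
  · rintro rfl; rw [dinv_dinv]

lemma dtail_dinv (d : G.Dir) : G.dtail (G.dinv d) = G.dhead d := by
  rcases d with ⟨e, b⟩; cases b <;> simp [dinv, dtail, dhead]

lemma dhead_dinv (d : G.Dir) : G.dhead (G.dinv d) = G.dtail d := by
  rcases d with ⟨e, b⟩; cases b <;> simp [dinv, dtail, dhead]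

lemma chain'_iff_getD {α : Type*} {R : α → α → Prop} {l : List α} (d₀ : α) :
    l.Chain' R ↔ ∀ i, i + 1 < l.length → R (l.getD i d₀) (l.getD (i+1) d₀) := by
  rw [List.Chain', List.isChain_iff_getElem]
  constructor
  · intro h i hi
    rw [List.getD_eq_getElem l d₀ (by omega), List.getD_eq_getElem l d₀ hi]
    have := h i (by omega)
    simpa [List.get_eq_getElem] using this
  · intro h i hi
    have := h i (by omega)
    rw [List.getD_eq_getElem l d₀ (by omega), List.getD_eq_getElem l d₀ (by omega)] at this
    simpa [List.get_eq_getElem] using this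

lemma isWalk_iff {w : List G.Dir} (d₀ : G.Dir) :
    G.IsWalk w ↔ ∀ i, i + 1 < w.length →
      G.dhead (w.getD i d₀) = G.dtail (w.getD (i+1) d₀) := chain'_iff_getD d₀

lemma nonBack_iff {w : List G.Dir} (d₀ : G.Dir) :
    G.NonBack w ↔ ∀ i, i + 1 < w.length →
      w.getD (i+1) d₀ ≠ G.dinv (w.getD i d₀) := chain'_iff_getD d₀

lemma head?_eq_getD {α : Type*} {l : List α} (h : l ≠ []) (d₀ : α) :
    l.head? = some (l.getD 0 d₀) := by
  have h0 : 0 < l.length := List.length_pos_iff.mpr h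
  rw [List.head?_eq_getElem?, List.getElem?_eq_getElem h0, List.getD_eq_getElem l d₀ h0]

lemma getLast?_eq_getD {α : Type*} {l : List α} (h : l ≠ []) (d₀ : α) :
    l.getLast? = some (l.getD (l.length - 1) d₀) := by
  have h0 : l.length - 1 < l.length := by
    have := List.length_pos_iff.mpr h; omega
  rw [List.getLast?_eq_getElem?, List.getElem?_eq_getElem h0, List.getD_eq_getElem l d₀ h0]

lemma wstart_eq {w : List G.Dir} (h : w ≠ []) (d₀ : G.Dir) :
    G.wstart w = some (G.dtail (w.getD 0 d₀)) := by
  rw [wstart, head?_eq_getD h d₀]; rfl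

lemma wend_eq {w : List G.Dir} (h : w ≠ []) (d₀ : G.Dir) :
    G.wend w = some (G.dhead (w.getD (w.length - 1) d₀)) := by
  rw [wend, getLast?_eq_getD h d₀]; rfl

lemma closed_iff {w : List G.Dir} (h : w ≠ []) (d₀ : G.Dir) :
    G.Closed w ↔ G.dtail (w.getD 0 d₀) = G.dhead (w.getD (w.length - 1) d₀) := by
  rw [Closed, wstart_eq h d₀, wend_eq h d₀]
  simp [h]


/-- Contiguous segment of a walk, positions `a` through `b` inclusive. -/
def seg (w : List G.Dir) (a b : ℕ) : List G.Dir := (w.drop a).take (b + 1 - a)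

lemma length_seg {w : List G.Dir} {b : ℕ} (a : ℕ) (hb : b < w.length) :
    (seg w a b).length = b + 1 - a := by
  simp only [seg, List.length_take, List.length_drop]
  omega

lemma getD_seg {w : List G.Dir} (d₀ : G.Dir) {a b i : ℕ} (hi : i < b + 1 - a)
    (hm : a + i < w.length) : (seg w a b).getD i d₀ = w.getD (a + i) d₀ := by
  have h1 : i < (seg w a b).length := by
    simp only [seg, List.length_take, List.length_drop]; omega
  rw [List.getD_eq_getElem _ _ h1, List.getD_eq_getElem _ _ hm]
  simp only [seg, List.getElem_take, List.getElem_drop]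

lemma getElem_seg {w : List G.Dir} {a b i : ℕ} (hm : a + i < w.length)
    (h : i < (seg w a b).length) : (seg w a b)[i] = w[a + i] := by
  simp only [seg, List.getElem_take, List.getElem_drop]

lemma seg_walk {w : List G.Dir} (hW : G.IsWalk w) (a b : ℕ) :
    G.IsWalk (seg w a b) := (hW.drop a).take _

lemma seg_nonBack {w : List G.Dir} (hN : G.NonBack w) (a b : ℕ) :
    G.NonBack (seg w a b) := (hN.drop a).take _

lemma seg_ne_nil {w : List G.Dir} {a b : ℕ} (hab : a ≤ b) (hb : b < w.length) :
    seg w a b ≠ [] := by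
  rw [← List.length_pos_iff, length_seg a hb]; omega

/-- reversal-with-inversion of a walk -/
def rinv (w : List G.Dir) : List G.Dir := (w.map G.dinv).reverse

lemma length_rinv (w : List G.Dir) : (rinv w).length = w.length := by
  simp [rinv]

lemma rinv_walk {w : List G.Dir} (hW : G.IsWalk w) : G.IsWalk (rinv w) := by
  rw [IsWalk, rinv, List.Chain', List.isChain_reverse, List.isChain_map]
  refine hW.imp ?_
  intro a b h
  show G.dhead (G.dinv b) = G.dtail (G.dinv a)
  rw [dhead_dinv, dtail_dinv, h]

lemma rinv_nonBack {w : List G.Dir} (hN : G.NonBack w) : G.NonBack (rinv w) := by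
  rw [NonBack, rinv, List.Chain', List.isChain_reverse, List.isChain_map]
  refine hN.imp ?_
  intro a b h
  show G.dinv a ≠ G.dinv (G.dinv b)
  rw [dinv_dinv]
  exact Ne.symm h

lemma getD_rinv {w : List G.Dir} (d₀ : G.Dir) {i : ℕ} (hi : i < w.length) :
    (rinv w).getD i d₀ = G.dinv (w.getD (w.length - 1 - i) d₀) := by
  have h1 : i < (rinv w).length := by rwa [length_rinv]
  have h2 : w.length - 1 - i < w.length := by omega
  rw [List.getD_eq_getElem _ _ h1, List.getD_eq_getElem _ _ h2]
  simp only [rinv, List.getElem_reverse, List.getElem_map, List.length_map]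

lemma rinv_ne_nil {w : List G.Dir} (h : w ≠ []) : rinv w ≠ [] := by
  rw [← List.length_pos_iff, length_rinv, List.length_pos_iff]; exact h


section Splice

variable {w : List G.Dir} (d₀ : G.Dir)

/-- Spliced walk from two chords `(a,c)` and `(b,d)` with `a < b ≤ c < d`. -/
lemma splice_main (hW : G.IsWalk w) (hN : G.NonBack w)
    {a b c d : ℕ} (hab : a < b) (hbc : b ≤ c) (hcd : c < d) (hdm : d < w.length)
    (h1 : w.getD c d₀ = G.dinv (w.getD a d₀)) (h2 : w.getD d d₀ = G.dinv (w.getD b d₀)) :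
    ∃ W : List G.Dir, G.IsWalk W ∧ G.NonBack W ∧ G.Closed W ∧
      W.length = (b - a) + (d - c) := by
  classical
  set m := w.length with hm
  have hwalk : ∀ i, i + 1 < m → G.dhead (w.getD i d₀) = G.dtail (w.getD (i+1) d₀) :=
    (isWalk_iff d₀).mp hW
  have hnb : ∀ i, i + 1 < m → w.getD (i+1) d₀ ≠ G.dinv (w.getD i d₀) :=
    (nonBack_iff d₀).mp hN
  set A := seg w a b with hA
  set B := seg w (c+1) (d-1) with hB
  have hbm : b < m := by omega
  have hdm1 : d - 1 < m := by omega
  have hlenA : A.length = b + 1 - a := length_seg a hbm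
  have hlenB : B.length = d - 1 + 1 - (c + 1) := length_seg (c+1) hdm1
  have hlenB' : B.length = d - c - 1 := by omega
  have hAne : A ≠ [] := seg_ne_nil (by omega) hbm
  -- getD values
  have hA0 : A.getD 0 d₀ = w.getD a d₀ := by
    rw [hA, getD_seg d₀ (by omega) (by omega)]
    simp
  have hAlast : A.getD (A.length - 1) d₀ = w.getD b d₀ := by
    rw [hlenA, hA, getD_seg d₀ (by omega) (by omega)]
    congr 1; omega
  have hBfirst : B ≠ [] → B.getD 0 d₀ = w.getD (c+1) d₀ := by
    intro h
    have : 0 < B.length := List.length_pos_iff.mpr h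
    rw [hB, getD_seg d₀ (by omega) (by omega)]
  have hBlast : B ≠ [] → B.getD (B.length - 1) d₀ = w.getD (d-1) d₀ := by
    intro h
    have hp : 0 < B.length := List.length_pos_iff.mpr h
    rw [hlenB', hB, getD_seg d₀ (by omega) (by omega)]
    congr 1; omega
  refine ⟨A ++ rinv B, ?_, ?_, ?_, ?_⟩
  · -- IsWalk
    rw [IsWalk, List.Chain', List.isChain_append]
    refine ⟨seg_walk hW a b, rinv_walk (seg_walk hW _ _), ?_⟩
    intro x hx y hy
    by_cases hBe : B = []
    · rw [hBe] at hy; simp [rinv] at hy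
    · have hBlen : 0 < B.length := List.length_pos_iff.mpr hBe
      rw [getLast?_eq_getD hAne d₀] at hx
      rw [head?_eq_getD (rinv_ne_nil hBe) d₀] at hy
      obtain rfl : x = A.getD (A.length - 1) d₀ := (Option.mem_some_iff.mp hx).symm
      obtain rfl : y = (rinv B).getD 0 d₀ := (Option.mem_some_iff.mp hy).symm
      rw [getD_rinv d₀ (by omega), show B.length - 1 - 0 = B.length - 1 by omega,
        hBlast hBe, hAlast]
      show G.dhead (w.getD b d₀) = G.dtail (G.dinv (w.getD (d-1) d₀))
      rw [dtail_dinv]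
      have e1 : G.dhead (w.getD (d-1) d₀) = G.dtail (w.getD d d₀) := by
        have := hwalk (d-1) (by omega)
        simpa [show d - 1 + 1 = d by omega] using this
      rw [e1, h2, dtail_dinv]
  · -- NonBack
    rw [NonBack, List.Chain', List.isChain_append]
    refine ⟨seg_nonBack hN a b, rinv_nonBack (seg_nonBack hN _ _), ?_⟩
    intro x hx y hy
    by_cases hBe : B = []
    · rw [hBe] at hy; simp [rinv] at hy
    · have hBlen : 0 < B.length := List.length_pos_iff.mpr hBe
      rw [getLast?_eq_getD hAne d₀] at hx
      rw [head?_eq_getD (rinv_ne_nil hBe) d₀] at hy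
      obtain rfl : x = A.getD (A.length - 1) d₀ := (Option.mem_some_iff.mp hx).symm
      obtain rfl : y = (rinv B).getD 0 d₀ := (Option.mem_some_iff.mp hy).symm
      rw [getD_rinv d₀ (by omega), show B.length - 1 - 0 = B.length - 1 by omega,
        hBlast hBe, hAlast]
      intro hcontra
      -- hcontra : dinv (w_{d-1}) = dinv (w_b); so w_d = dinv w_b = dinv (w_{d-1})... 
      -- NB at d-1 : w_d ≠ dinv w_{d-1}
      have : w.getD d d₀ = G.dinv (w.getD (d-1) d₀) := by rw [h2, ← hcontra]
      have hnbd := hnb (d-1) (by omega)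
      rw [show d - 1 + 1 = d by omega] at hnbd
      exact hnbd this
  · -- Closed
    have hWne : A ++ rinv B ≠ [] := by
      intro h
      exact hAne (List.append_eq_nil_iff.mp h).1
    refine ⟨hWne, ?_⟩
    rw [wstart_eq hWne d₀, wend_eq hWne d₀]
    congr 1
    have hstart : (A ++ rinv B).getD 0 d₀ = w.getD a d₀ := by
      rw [List.getD_append _ _ _ _ (by rw [hlenA]; omega), hA0]
    rw [hstart]
    by_cases hBe : B = []
    · have hBlen0 : B.length = 0 := by rw [hBe]; rfl
      have hdc : d = c + 1 := by omega
      have hlast : (A ++ rinv B).getD ((A ++ rinv B).length - 1) d₀ = w.getD b d₀ := by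
        have : (A ++ rinv B).length = A.length := by
          simp [length_rinv, hBlen0, List.length_append, rinv, hBe]
        rw [this, List.getD_append _ _ _ _ (by omega), hAlast]
      rw [hlast]
      -- dtail w_a = dhead w_b : via h2, walk at c, h1
      have e1 : G.dtail (w.getD d d₀) = G.dhead (w.getD b d₀) := by
        rw [h2, dtail_dinv]
      have e2 : G.dhead (w.getD c d₀) = G.dtail (w.getD d d₀) := by
        have := hwalk c (by omega)
        simpa [show c + 1 = d by omega] using this
      rw [← e1, ← e2, h1, dhead_dinv]
    · have hBlen : 0 < B.length := List.length_pos_iff.mpr hBe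
      have hlen : (A ++ rinv B).length = A.length + B.length := by
        simp [List.length_append, length_rinv]
      have hlast : (A ++ rinv B).getD ((A ++ rinv B).length - 1) d₀
          = G.dinv (w.getD (c+1) d₀) := by
        rw [hlen, List.getD_append_right _ _ _ _ (by omega)]
        have hidx : A.length + B.length - 1 - A.length = B.length - 1 := by omega
        rw [hidx, getD_rinv d₀ (by omega)]
        rw [show B.length - 1 - (B.length - 1) = 0 by omega, hBfirst hBe]
      rw [hlast, dhead_dinv]
      have e1 : G.dhead (w.getD c d₀) = G.dtail (w.getD (c+1) d₀) := hwalk c (by omega)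
      rw [← e1, h1, dhead_dinv]
  · -- length
    rw [List.length_append, length_rinv, hlenA, hlenB']
    omega


/-- Spliced walk using the wrap-around: chords `(0, a+1)` and `(a, c)`. -/
lemma splice_last (hW : G.IsWalk w) (hN : G.NonBack w) (hC : G.Closed w)
    (hcyc : w.getD 0 d₀ ≠ G.dinv (w.getD (w.length - 1) d₀))
    {a c : ℕ} (hac : a + 1 ≤ c) (hcm : c < w.length)
    (h1 : w.getD (a+1) d₀ = G.dinv (w.getD 0 d₀))
    (h2 : w.getD c d₀ = G.dinv (w.getD a d₀)) :
    ∃ W : List G.Dir, G.IsWalk W ∧ G.NonBack W ∧ G.Closed W ∧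
      W.length = 2 + (w.length - 1 - c) := by
  classical
  set m := w.length with hm
  have hwalk : ∀ i, i + 1 < m → G.dhead (w.getD i d₀) = G.dtail (w.getD (i+1) d₀) :=
    (isWalk_iff d₀).mp hW
  have hclosed : G.dtail (w.getD 0 d₀) = G.dhead (w.getD (m - 1) d₀) :=
    (closed_iff hC.1 d₀).mp hC
  set A := seg w a (a+1) with hA
  set B := seg w (c+1) (m-1) with hB
  have ham : a + 1 < m := by omega
  have hm1 : m - 1 < m := by omega
  have hlenA : A.length = 2 := by rw [hA, length_seg a ham]; omega
  have hlenB : B.length = m - 1 - c := by rw [hB, length_seg (c+1) hm1]; omega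
  have hAne : A ≠ [] := seg_ne_nil (by omega) ham
  have hA0 : A.getD 0 d₀ = w.getD a d₀ := by
    rw [hA, getD_seg d₀ (by omega) (by omega)]; simp
  have hAlast : A.getD (A.length - 1) d₀ = w.getD (a+1) d₀ := by
    rw [hlenA, hA, getD_seg d₀ (by omega) (by omega)]
  have hBfirst : B ≠ [] → B.getD 0 d₀ = w.getD (c+1) d₀ := by
    intro h
    have : 0 < B.length := List.length_pos_iff.mpr h
    rw [hB, getD_seg d₀ (by omega) (by omega)]
  have hBlast : B ≠ [] → B.getD (B.length - 1) d₀ = w.getD (m-1) d₀ := by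
    intro h
    have hp : 0 < B.length := List.length_pos_iff.mpr h
    rw [hlenB, hB, getD_seg d₀ (by omega) (by omega)]
    congr 1; omega
  refine ⟨A ++ rinv B, ?_, ?_, ?_, ?_⟩
  · rw [IsWalk, List.Chain', List.isChain_append]
    refine ⟨seg_walk hW _ _, rinv_walk (seg_walk hW _ _), ?_⟩
    intro x hx y hy
    by_cases hBe : B = []
    · rw [hBe] at hy; simp [rinv] at hy
    · have hBlen : 0 < B.length := List.length_pos_iff.mpr hBe
      rw [getLast?_eq_getD hAne d₀] at hx
      rw [head?_eq_getD (rinv_ne_nil hBe) d₀] at hy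
      obtain rfl : x = A.getD (A.length - 1) d₀ := (Option.mem_some_iff.mp hx).symm
      obtain rfl : y = (rinv B).getD 0 d₀ := (Option.mem_some_iff.mp hy).symm
      rw [getD_rinv d₀ (by omega), show B.length - 1 - 0 = B.length - 1 by omega,
        hBlast hBe, hAlast]
      rw [dtail_dinv, h1, dhead_dinv, hclosed]
  · rw [NonBack, List.Chain', List.isChain_append]
    refine ⟨seg_nonBack hN _ _, rinv_nonBack (seg_nonBack hN _ _), ?_⟩
    intro x hx y hy
    by_cases hBe : B = []
    · rw [hBe] at hy; simp [rinv] at hy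
    · have hBlen : 0 < B.length := List.length_pos_iff.mpr hBe
      rw [getLast?_eq_getD hAne d₀] at hx
      rw [head?_eq_getD (rinv_ne_nil hBe) d₀] at hy
      obtain rfl : x = A.getD (A.length - 1) d₀ := (Option.mem_some_iff.mp hx).symm
      obtain rfl : y = (rinv B).getD 0 d₀ := (Option.mem_some_iff.mp hy).symm
      rw [getD_rinv d₀ (by omega), show B.length - 1 - 0 = B.length - 1 by omega,
        hBlast hBe, hAlast, h1, dinv_dinv]
      intro hcontra
      exact hcyc hcontra.symm
  · have hWne : A ++ rinv B ≠ [] := fun h => hAne (List.append_eq_nil_iff.mp h).1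
    refine ⟨hWne, ?_⟩
    rw [wstart_eq hWne d₀, wend_eq hWne d₀]
    congr 1
    have hstart : (A ++ rinv B).getD 0 d₀ = w.getD a d₀ := by
      rw [List.getD_append _ _ _ _ (by rw [hlenA]; omega), hA0]
    rw [hstart]
    by_cases hBe : B = []
    · have hBlen0 : B.length = 0 := by rw [hBe]; rfl
      have hcm1 : c = m - 1 := by omega
      have hlast : (A ++ rinv B).getD ((A ++ rinv B).length - 1) d₀ = w.getD (a+1) d₀ := by
        have hl : (A ++ rinv B).length = A.length := by
          simp [List.length_append, length_rinv, hBlen0]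
        rw [hl, List.getD_append _ _ _ _ (by omega), hAlast]
      rw [hlast, h1, dhead_dinv, hclosed, ← hcm1, h2, dhead_dinv]
    · have hBlen : 0 < B.length := List.length_pos_iff.mpr hBe
      have hlen : (A ++ rinv B).length = A.length + B.length := by
        simp [List.length_append, length_rinv]
      have hlast : (A ++ rinv B).getD ((A ++ rinv B).length - 1) d₀
          = G.dinv (w.getD (c+1) d₀) := by
        rw [hlen, List.getD_append_right _ _ _ _ (by omega)]
        have hidx : A.length + B.length - 1 - A.length = B.length - 1 := by omega
        rw [hidx, getD_rinv d₀ (by omega)]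
        rw [show B.length - 1 - (B.length - 1) = 0 by omega, hBfirst hBe]
      rw [hlast, dhead_dinv]
      have e1 : G.dhead (w.getD c d₀) = G.dtail (w.getD (c+1) d₀) := hwalk c (by omega)
      rw [← e1, h2, dhead_dinv]
  · rw [List.length_append, length_rinv, hlenA, hlenB]

end Splice


section Rot

/-- Rotation of a list by `k`. -/
def rot {α : Type*} (w : List α) (k : ℕ) : List α := w.drop k ++ w.take k

lemma length_rot {α : Type*} (w : List α) (k : ℕ) : (rot w k).length = w.length := by
  simp only [rot, List.length_append, List.length_drop, List.length_take]
  omega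

lemma getD_rot {α : Type*} {w : List α} (d₀ : α) {k i : ℕ} (hk : k < w.length)
    (hi : i < w.length) :
    (rot w k).getD i d₀ = w.getD ((i + k) % w.length) d₀ := by
  rcases lt_or_ge i (w.length - k) with h | h
  · have hik : i + k < w.length := by omega
    rw [Nat.mod_eq_of_lt hik, rot,
      List.getD_append _ _ _ _ (by rw [List.length_drop]; omega)]
    have hlt : i < (w.drop k).length := by rw [List.length_drop]; omega
    rw [List.getD_eq_getElem _ _ hlt, List.getD_eq_getElem _ _ hik]
    rw [List.getElem_drop]
    congr 1
    omega
  · have he : (i + k) % w.length = i + k - w.length := by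
      rw [Nat.mod_eq_sub_mod (by omega)]
      exact Nat.mod_eq_of_lt (by omega)
    rw [he, rot, List.getD_append_right _ _ _ _ (by rw [List.length_drop]; omega)]
    have hlt : i - (w.drop k).length < (w.take k).length := by
      rw [List.length_drop, List.length_take]; omega
    have hlt2 : i + k - w.length < w.length := by omega
    rw [List.getD_eq_getElem _ _ hlt, List.getD_eq_getElem _ _ hlt2]
    rw [List.getElem_take]
    congr 1
    rw [List.length_drop]
    omega

variable {w : List G.Dir} (d₀ : G.Dir)

lemma walk_cyc (hW : G.IsWalk w) (hC : G.Closed w) :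
    ∀ j < w.length, G.dhead (w.getD j d₀) = G.dtail (w.getD ((j+1) % w.length) d₀) := by
  intro j hj
  rcases lt_or_ge (j+1) w.length with h | h
  · rw [Nat.mod_eq_of_lt h]
    exact (isWalk_iff d₀).mp hW j h
  · have hj1 : j = w.length - 1 := by omega
    have : (j + 1) % w.length = 0 := by
      have : j + 1 = w.length := by omega
      simp [this]
    rw [this, hj1]
    exact ((closed_iff hC.1 d₀).mp hC).symm

lemma nb_cyc (hN : G.NonBack w) (hne : w ≠ [])
    (hcyc : w.getD 0 d₀ ≠ G.dinv (w.getD (w.length - 1) d₀)) :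
    ∀ j < w.length, w.getD ((j+1) % w.length) d₀ ≠ G.dinv (w.getD j d₀) := by
  intro j hj
  rcases lt_or_ge (j+1) w.length with h | h
  · rw [Nat.mod_eq_of_lt h]
    exact (nonBack_iff d₀).mp hN j h
  · have hj1 : j = w.length - 1 := by omega
    have h0 : (j + 1) % w.length = 0 := by
      have : j + 1 = w.length := by omega
      simp [this]
    rw [h0, hj1]
    exact hcyc

lemma mod_succ_eq {x m : ℕ} (hm : 1 < m) : (x + 1) % m = (x % m + 1) % m := by
  conv_lhs => rw [Nat.add_mod]
  rw [Nat.mod_eq_of_lt hm]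

lemma rot_walk (d₀ : G.Dir) (hW : G.IsWalk w) (hC : G.Closed w) {k : ℕ} (hk : k < w.length)
    (hm : 1 < w.length) : G.IsWalk (rot w k) := by
  rw [isWalk_iff d₀]
  intro i hi
  rw [length_rot] at hi
  rw [getD_rot d₀ hk (by omega), getD_rot d₀ hk (by omega)]
  have h1 : (i + 1 + k) % w.length = ((i + k) % w.length + 1) % w.length := by
    rw [show i + 1 + k = (i + k) + 1 by omega, mod_succ_eq hm]
  rw [h1]
  exact walk_cyc d₀ hW hC _ (Nat.mod_lt _ (by omega))

lemma rot_nonBack (d₀ : G.Dir) (hN : G.NonBack w) (hne : w ≠ [])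
    (hcyc : w.getD 0 d₀ ≠ G.dinv (w.getD (w.length - 1) d₀)) {k : ℕ} (hk : k < w.length)
    (hm : 1 < w.length) : G.NonBack (rot w k) := by
  rw [nonBack_iff d₀]
  intro i hi
  rw [length_rot] at hi
  rw [getD_rot d₀ hk (by omega), getD_rot d₀ hk (by omega)]
  have h1 : (i + 1 + k) % w.length = ((i + k) % w.length + 1) % w.length := by
    rw [show i + 1 + k = (i + k) + 1 by omega, mod_succ_eq hm]
  rw [h1]
  exact nb_cyc d₀ hN hne hcyc _ (Nat.mod_lt _ (by omega))

lemma rot_ne_nil (hne : w ≠ []) (k : ℕ) : rot w k ≠ [] := by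
  rw [← List.length_pos_iff, length_rot, List.length_pos_iff]; exact hne

lemma rot_closed (d₀ : G.Dir) (hW : G.IsWalk w) (hC : G.Closed w) {k : ℕ} (hk : k < w.length)
    (hm : 1 < w.length) : G.Closed (rot w k) := by
  have hne := rot_ne_nil (G := G) hC.1 k
  refine (closed_iff hne d₀).mpr ?_
  rw [length_rot, getD_rot d₀ hk (by omega), getD_rot d₀ hk (by omega)]
  have h0 : (0 + k) % w.length = k := by
    rw [Nat.zero_add, Nat.mod_eq_of_lt hk]
  have hj : ((w.length - 1 + k) % w.length + 1) % w.length = k := by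
    rw [← mod_succ_eq hm, show w.length - 1 + k + 1 = w.length + k by omega,
      Nat.add_mod_left, Nat.mod_eq_of_lt hk]
  rw [h0]
  have := walk_cyc d₀ hW hC ((w.length - 1 + k) % w.length) (Nat.mod_lt _ (by omega))
  rw [hj] at this
  exact this.symm

lemma rot_cyc (d₀ : G.Dir) (hN : G.NonBack w) (hW : G.IsWalk w) (hC : G.Closed w)
    (hcyc : w.getD 0 d₀ ≠ G.dinv (w.getD (w.length - 1) d₀)) {k : ℕ} (hk : k < w.length)
    (hm : 1 < w.length) :
    (rot w k).getD 0 d₀ ≠ G.dinv ((rot w k).getD ((rot w k).length - 1) d₀) := by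
  rw [length_rot, getD_rot d₀ hk (by omega), getD_rot d₀ hk (by omega)]
  have h0 : (0 + k) % w.length = k := by
    rw [Nat.zero_add, Nat.mod_eq_of_lt hk]
  have hj : ((w.length - 1 + k) % w.length + 1) % w.length = k := by
    rw [← mod_succ_eq hm, show w.length - 1 + k + 1 = w.length + k by omega,
      Nat.add_mod_left, Nat.mod_eq_of_lt hk]
  rw [h0]
  have := nb_cyc d₀ hN hC.1 hcyc ((w.length - 1 + k) % w.length) (Nat.mod_lt _ (by omega))
  rw [hj] at this
  exact this

lemma cnt_rot (k : ℕ) (d : G.Dir) : G.cnt (rot w k) d = G.cnt w d := by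
  have hp : (rot w k).Perm w := by
    rw [rot]
    exact (List.perm_append_comm).trans (by rw [List.take_append_drop])
  simp only [cnt]
  letI := Classical.decEq G.Dir
  exact hp.count_eq d

lemma rot_neutral (hE : G.EdgeNeutral w) (k : ℕ) : G.EdgeNeutral (rot w k) := by
  intro e
  rw [cnt_rot, cnt_rot]
  exact hE e

end Rot


section Count

lemma cnt_pos_iff {w : List G.Dir} {d : G.Dir} : 0 < G.cnt w d ↔ d ∈ w := by
  letI : DecidableEq G.Dir := Classical.decEq G.Dir
  haveI : LawfulBEq G.Dir := inferInstance
  show 0 < w.count d ↔ d ∈ w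
  exact List.count_pos_iff

lemma cnt_dinv {w : List G.Dir} (hE : G.EdgeNeutral w) (d : G.Dir) :
    G.cnt w (G.dinv d) = G.cnt w d := by
  rcases d with ⟨e, b⟩
  cases b
  · simpa [dinv] using (hE e)
  · simpa [dinv] using (hE e).symm

lemma exists_partner {w : List G.Dir} (hE : G.EdgeNeutral w) (d₀ : G.Dir) {z : ℕ}
    (hz : z < w.length) :
    ∃ p, p < w.length ∧ w.getD p d₀ = G.dinv (w.getD z d₀) := by
  have hmem : w.getD z d₀ ∈ w := by
    rw [List.getD_eq_getElem _ _ hz]; exact List.getElem_mem _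
  have h1 : 0 < G.cnt w (w.getD z d₀) := cnt_pos_iff.mpr hmem
  have h2 : 0 < G.cnt w (G.dinv (w.getD z d₀)) := by rw [cnt_dinv hE]; exact h1
  obtain ⟨p, hp, hpe⟩ := List.mem_iff_getElem.mp (cnt_pos_iff.mp h2)
  exact ⟨p, hp, by rw [List.getD_eq_getElem _ _ hp, hpe]⟩

end Count

lemma girth_le {W : List G.Dir} (hW : G.IsWalk W) (hN : G.NonBack W) (hC : G.Closed W) :
    G.girth ≤ (W.length : ℕ∞) :=
  sInf_le ⟨W, hW, hN, hC, rfl⟩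

/-- The core argument, for a gap-normalized walk. -/
lemma core {w : List G.Dir} (d₀ : G.Dir) (hW : G.IsWalk w) (hN : G.NonBack w)
    (hC : G.Closed w) (hE : G.EdgeNeutral w) {l : ℕ} (hl : 1 ≤ l)
    (hlm : l + 1 < w.length)
    (hchord : w.getD (l+1) d₀ = G.dinv (w.getD 0 d₀))
    (hgap : ∀ i j, i < j → j < w.length → w.getD j d₀ = G.dinv (w.getD i d₀) →
      l + 1 ≤ j - i ∧ l + 1 ≤ w.length - (j - i)) :
    3 * G.girth ≤ (w.length : ℕ∞) := by
  set m := w.length with hm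
  have hwalk : ∀ i, i + 1 < m → G.dhead (w.getD i d₀) = G.dtail (w.getD (i+1) d₀) :=
    (isWalk_iff d₀).mp hW
  -- m is at least 2l+2
  have hm2l : 2 * l + 2 ≤ m := by
    have := hgap 0 (l+1) (by omega) hlm hchord
    omega
  -- cyclic reducedness
  have hcyc : w.getD 0 d₀ ≠ G.dinv (w.getD (m - 1) d₀) := by
    intro h
    have h' : w.getD (m-1) d₀ = G.dinv (w.getD 0 d₀) := by
      rw [h, dinv_dinv]
    have := hgap 0 (m-1) (by omega) (by omega) h'
    omega
  -- the interior walk u, giving girth ≤ l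
  have hgl : G.girth ≤ (l : ℕ∞) := by
    have hlm' : l < m := by omega
    have hu_len : (seg w 1 l).length = l := by rw [length_seg 1 hlm']; omega
    have hu_ne : seg w 1 l ≠ [] := seg_ne_nil hl hlm'
    have hu_closed : G.Closed (seg w 1 l) := by
      refine (closed_iff hu_ne d₀).mpr ?_
      rw [hu_len, getD_seg d₀ (by omega) (by omega), getD_seg d₀ (by omega) (by omega)]
      rw [show (1 : ℕ) + 0 = 1 by omega, show 1 + (l - 1) = l by omega]
      have e1 : G.dtail (w.getD 1 d₀) = G.dhead (w.getD 0 d₀) := (hwalk 0 (by omega)).symm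
      have e2 : G.dhead (w.getD l d₀) = G.dtail (w.getD (l+1) d₀) := hwalk l (by omega)
      rw [e1, e2, hchord, dtail_dinv]
    have := girth_le (seg_walk hW 1 l) (seg_nonBack hN 1 l) hu_closed
    rwa [hu_len] at this
  -- partners of positions 1 and l
  have hpartner : ∀ z, 1 ≤ z → z ≤ l →
      ∃ p, l + 2 ≤ p ∧ p < m ∧ w.getD p d₀ = G.dinv (w.getD z d₀) := by
    intro z hz1 hzl
    obtain ⟨p, hpm, hpe⟩ := exists_partner hE d₀ (show z < m by omega)
    refine ⟨p, ?_, hpm, hpe⟩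
    -- p ≠ 0
    have hp0 : p ≠ 0 := by
      intro h0
      rw [h0] at hpe
      have h' : w.getD z d₀ = G.dinv (w.getD 0 d₀) := by
        rw [hpe, dinv_dinv]
      have := hgap 0 z (by omega) (by omega) h'
      omega
    -- p ≠ l + 1
    have hpl1 : p ≠ l + 1 := by
      intro h0
      rw [h0] at hpe
      have := hgap z (l+1) (by omega) (by omega) hpe
      omega
    -- p ∉ [1, l]
    have hpu : ¬ (1 ≤ p ∧ p ≤ l) := by
      rintro ⟨hp1, hp2⟩
      rcases lt_trichotomy p z with h | h | h
      · have h' : w.getD z d₀ = G.dinv (w.getD p d₀) := by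
          rw [hpe, dinv_dinv]
        have := hgap p z h (by omega) h'
        omega
      · rw [h] at hpe
        exact dinv_ne _ hpe.symm
      · have := hgap z p h hpm hpe
        omega
    omega
  obtain ⟨p1, hp1l, hp1m, hp1e⟩ := hpartner 1 le_rfl hl
  by_cases hl2 : 2 ≤ l
  · obtain ⟨pl, hpll, hplm, hple⟩ := hpartner l hl le_rfl
    by_cases hcross : p1 < pl
    · -- three spliced walks
      obtain ⟨W1, hW1w, hW1n, hW1c, hW1len⟩ :=
        splice_main d₀ hW hN (show 0 < 1 by omega) (show 1 ≤ l + 1 by omega)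
          (show l + 1 < p1 by omega) (show p1 < m from hp1m) hchord hp1e
      obtain ⟨W2, hW2w, hW2n, hW2c, hW2len⟩ :=
        splice_main d₀ hW hN (show 1 < l by omega) (show l ≤ p1 by omega)
          (show p1 < pl from hcross) (show pl < m from hplm) hp1e hple
      obtain ⟨W3, hW3w, hW3n, hW3c, hW3len⟩ :=
        splice_last d₀ hW hN hC hcyc (show l + 1 ≤ pl by omega)
          (show pl < m from hplm) hchord hple
      have g1 := girth_le hW1w hW1n hW1c
      have g2 := girth_le hW2w hW2n hW2c
      have g3 := girth_le hW3w hW3n hW3c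
      have hsum : W1.length + W2.length + W3.length = m := by
        rw [hW1len, hW2len, hW3len]; omega
      calc 3 * G.girth = G.girth + G.girth + G.girth := by ring
        _ ≤ (W1.length : ℕ∞) + (W2.length : ℕ∞) + (W3.length : ℕ∞) :=
            add_le_add (add_le_add g1 g2) g3
        _ = ((W1.length + W2.length + W3.length : ℕ) : ℕ∞) := by push_cast; ring
        _ = (m : ℕ∞) := by rw [hsum]
    · -- anti-ordered: m ≥ 3l + 1
      push_neg at hcross
      have b1 : l + 1 ≤ pl - l := (hgap l pl (by omega) hplm hple).1
      have b2 : l + 1 ≤ m - (p1 - 1) := (hgap 1 p1 (by omega) hp1m hp1e).2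
      have h3l : 3 * l + 1 ≤ m := by omega
      calc 3 * G.girth ≤ 3 * (l : ℕ∞) := by
            exact mul_le_mul_right hgl 3
        _ = ((3 * l : ℕ) : ℕ∞) := by push_cast; ring
        _ ≤ (m : ℕ∞) := by
            exact_mod_cast Nat.le_of_lt (by omega)
  · -- l = 1 : m ≥ 4 ≥ 3l + 1
    have hl1 : l = 1 := by omega
    calc 3 * G.girth ≤ 3 * (l : ℕ∞) := mul_le_mul_right hgl 3
      _ = ((3 * l : ℕ) : ℕ∞) := by push_cast; ring
      _ ≤ (m : ℕ∞) := by
          exact_mod_cast (show 3 * l ≤ m by omega)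


/-- From a minimal-length closed non-backtracking edge-neutral walk. -/
lemma core_wrap {w : List G.Dir} (hW : G.IsWalk w) (hN : G.NonBack w) (hC : G.Closed w)
    (hE : G.EdgeNeutral w)
    (hmin : ∀ u : List G.Dir, G.IsWalk u → G.NonBack u → G.Closed u → G.EdgeNeutral u →
      w.length ≤ u.length) :
    3 * G.girth ≤ (w.length : ℕ∞) := by
  have hne : w ≠ [] := hC.1
  have hpos : 0 < w.length := List.length_pos_iff.mpr hne
  set m := w.length with hmdef
  have d₀ : G.Dir := w.head hne
  have hwalk : ∀ i, i + 1 < m → G.dhead (w.getD i d₀) = G.dtail (w.getD (i+1) d₀) :=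
    (isWalk_iff d₀).mp hW
  have hnb : ∀ i, i + 1 < m → w.getD (i+1) d₀ ≠ G.dinv (w.getD i d₀) :=
    (nonBack_iff d₀).mp hN
  -- cyclic reducedness from minimality
  have hcyc : w.getD 0 d₀ ≠ G.dinv (w.getD (m - 1) d₀) := by
    intro h
    have hm3 : 3 ≤ m := by
      rcases Nat.lt_or_ge m 3 with hs | hs
      · exfalso
        have hm12 : m = 1 ∨ m = 2 := by omega
        rcases hm12 with h1 | h2
        · have h' : w.getD 0 d₀ = G.dinv (w.getD 0 d₀) := by
            rw [show m - 1 = 0 by omega] at h; exact h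
          exact dinv_ne _ h'.symm
        · refine hnb 0 (by omega) ?_
          have h' : w.getD 0 d₀ = G.dinv (w.getD 1 d₀) := by
            rw [show m - 1 = 1 by omega] at h; exact h
          rw [h', dinv_dinv]
      · exact hs
    have hlast : w.getD (m-1) d₀ = G.dinv (w.getD 0 d₀) := by rw [h, dinv_dinv]
    set mid := seg w 1 (m - 2) with hmid
    have hmidlen : mid.length = m - 2 := by rw [hmid, length_seg 1 (by omega)]; omega
    have hmidne : mid ≠ [] := by
      have hp : 0 < mid.length := by rw [hmidlen]; omega
      exact List.length_pos_iff.mp hp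
    have hmidC : G.Closed mid := by
      refine ⟨hmidne, ?_⟩
      rw [wstart_eq hmidne d₀, wend_eq hmidne d₀, hmidlen]
      congr 1
      rw [hmid, getD_seg d₀ (by omega) (by omega), getD_seg d₀ (by omega) (by omega)]
      rw [show (1:ℕ) + 0 = 1 by omega, show 1 + (m - 2 - 1) = m - 2 by omega]
      have e1 : G.dtail (w.getD 1 d₀) = G.dhead (w.getD 0 d₀) := (hwalk 0 (by omega)).symm
      have e2 : G.dhead (w.getD (m-2) d₀) = G.dtail (w.getD (m-1) d₀) := by
        have := hwalk (m-2) (by omega)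
        rwa [show m - 2 + 1 = m - 1 by omega] at this
      rw [e1, h, dhead_dinv, e2]
    -- decomposition of w
    have hdecomp : w = w.getD 0 d₀ :: (mid ++ [w.getD (m-1) d₀]) := by
      apply List.ext_getElem
      · simp only [List.length_cons, List.length_append, List.length_singleton,
          List.length_nil, hmidlen]
        omega
      · intro i hi hi2
        rcases i with _ | j
        · rw [List.getElem_cons_zero, List.getD_eq_getElem _ _ hpos]
        · rw [List.getElem_cons_succ]
          have hj : j < m - 1 := by
            simp only [List.length_cons, List.length_append, List.length_singleton,
              hmidlen] at hi2
            omega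
          rcases Nat.lt_or_ge j (m - 2) with hj2 | hj2
          · rw [List.getElem_append_left (by rw [hmidlen]; omega)]
            have hjm : j < mid.length := by rw [hmidlen]; omega
            rw [← List.getD_eq_getElem mid d₀ hjm, hmid,
              getD_seg d₀ (by omega) (by omega),
              List.getD_eq_getElem _ _ (show 1 + j < w.length by omega)]
            congr 1
            omega
          · have hj3 : j = m - 2 := by omega
            rw [List.getElem_append_right (by rw [hmidlen]; omega)]
            simp only [hmidlen, List.getElem_singleton]
            rw [List.getD_eq_getElem _ _ (by omega : m - 1 < w.length)]
            congr 1
            omega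
    -- neutrality of mid
    have hmidE : G.EdgeNeutral mid := by
      letI : DecidableEq G.Dir := Classical.decEq G.Dir
      haveI : LawfulBEq G.Dir := inferInstance
      have hcount : ∀ d : G.Dir, G.cnt w d = G.cnt mid d
          + ((if w.getD 0 d₀ = d then 1 else 0) + if G.dinv (w.getD 0 d₀) = d then 1 else 0) := by
        intro d
        show w.count d = mid.count d + _
        conv_lhs => rw [hdecomp]
        rw [List.count_cons, List.count_append, List.count_singleton', hlast]
        simp only [beq_iff_eq]
        omega
      intro e
      have hw := hE e
      rw [hcount (e, true), hcount (e, false)] at hw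
      have hind : ((if w.getD 0 d₀ = (e, true) then 1 else 0)
            + if G.dinv (w.getD 0 d₀) = (e, true) then (1:ℕ) else 0)
          = ((if w.getD 0 d₀ = (e, false) then 1 else 0)
            + if G.dinv (w.getD 0 d₀) = (e, false) then 1 else 0) := by
        rcases hq : w.getD 0 d₀ with ⟨e₁, b₁⟩
        by_cases he : e₁ = e
        · subst he
          cases b₁ <;> simp [dinv]
        · cases b₁ <;> simp [dinv, Prod.ext_iff, he]
      omega
    have := hmin mid (seg_walk hW 1 (m-2)) (seg_nonBack hN 1 (m-2)) hmidC hmidE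
    rw [hmidlen] at this
    omega
  -- the set of gaps of inverse pairs
  have hnbcyc := nb_cyc d₀ hN hne hcyc
  set P : Set ℕ := {n | 0 < n ∧ n < m ∧
    ∃ k, k < m ∧ w.getD ((k + n) % m) d₀ = G.dinv (w.getD k d₀)} with hP
  have hPne : P.Nonempty := by
    obtain ⟨p, hpm, hpe⟩ := exists_partner hE d₀ hpos
    have hp0 : p ≠ 0 := by
      intro h0; rw [h0] at hpe; exact dinv_ne _ hpe.symm
    refine ⟨p, by omega, by omega, 0, by omega, ?_⟩
    rw [Nat.zero_add, Nat.mod_eq_of_lt hpm]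
    exact hpe
  set n₀ := sInf P with hn0
  obtain ⟨hn0pos, hn0m, k₀, hk0m, hk0e⟩ := Nat.sInf_mem hPne
  rw [← hn0] at hn0pos hn0m hk0e
  have hn02 : 2 ≤ n₀ := by
    by_contra hlt
    have h1 : n₀ = 1 := by omega
    rw [h1] at hk0e
    exact hnbcyc k₀ hk0m hk0e
  have hm1 : 1 < m := by omega
  -- rotate
  set w' := rot w k₀ with hw'
  have hlen' : w'.length = m := length_rot w k₀
  have hget : ∀ i, i < m → w'.getD i d₀ = w.getD ((i + k₀) % m) d₀ :=
    fun i hi => getD_rot d₀ hk0m hi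
  have hchord' : w'.getD n₀ d₀ = G.dinv (w'.getD 0 d₀) := by
    rw [hget n₀ hn0m, hget 0 (by omega), Nat.zero_add, Nat.mod_eq_of_lt hk0m,
      Nat.add_comm n₀ k₀]
    exact hk0e
  have hgap' : ∀ i j, i < j → j < m → w'.getD j d₀ = G.dinv (w'.getD i d₀) →
      n₀ ≤ j - i ∧ n₀ ≤ m - (j - i) := by
    intro i j hij hjm he
    rw [hget j hjm, hget i (by omega)] at he
    constructor
    · refine Nat.sInf_le ⟨by omega, by omega, (i + k₀) % m, Nat.mod_lt _ (by omega), ?_⟩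
      rw [Nat.mod_add_mod, show i + k₀ + (j - i) = j + k₀ by omega]
      exact he
    · refine Nat.sInf_le ⟨by omega, by omega, (j + k₀) % m, Nat.mod_lt _ (by omega), ?_⟩
      rw [Nat.mod_add_mod, show j + k₀ + (m - (j - i)) = m + (i + k₀) by omega,
        Nat.add_mod_left]
      rw [he, dinv_dinv]
  have hcore := core (w := w') d₀ (rot_walk d₀ hW hC hk0m hm1)
    (rot_nonBack d₀ hN hne hcyc hk0m hm1) (rot_closed d₀ hW hC hk0m hm1)
    (rot_neutral hE k₀) (l := n₀ - 1) (by omega)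
    (by rw [hlen']; omega)
    (by rw [show n₀ - 1 + 1 = n₀ by omega]; exact hchord')
    (by
      intro i j hij hjm he
      rw [hlen'] at hjm ⊢
      have := hgap' i j hij hjm he
      omega)
  rw [hlen'] at hcore
  exact hcore

end MGraph

/-- Three times the girth of a graph is at most its abelian girth. -/
theorem three_mul_girth_le_ablGirth (G : MGraph) :
    3 * G.girth ≤ G.ablGirth := by
  refine le_sInf ?_
  rintro b ⟨v, hvW, hvN, hvC, hvE, rfl⟩
  set S : Set ℕ := {n | ∃ u : List G.Dir, G.IsWalk u ∧ G.NonBack u ∧ G.Closed u ∧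
    G.EdgeNeutral u ∧ u.length = n} with hS
  have hSne : S.Nonempty := ⟨v.length, v, hvW, hvN, hvC, hvE, rfl⟩
  obtain ⟨w, hwW, hwN, hwC, hwE, hwlen⟩ := Nat.sInf_mem hSne
  have hmin : ∀ u : List G.Dir, G.IsWalk u → G.NonBack u → G.Closed u → G.EdgeNeutral u →
      w.length ≤ u.length := by
    intro u h1 h2 h3 h4
    rw [hwlen]
    exact Nat.sInf_le ⟨u, h1, h2, h3, h4, rfl⟩
  have h3g := MGraph.core_wrap hwW hwN hwC hwE hmin
  have hle : w.length ≤ v.length := hmin v hvW hvN hvC hvE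
  exact h3g.trans (by exact_mod_cast hle)
end
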